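/- Let G be a graph with an induced matching M whose edges are contracted to form G'. If G' contains an induced path on 3n+1 vertices, then G contains an induced path on at least 3n+1 vertices, and in particular contains P_n as an induced subgraph. -/

import Mathlib

open SimpleGraph Finset

/-- An independent set: pairwise non-adjacent vertices. -/
def IsIndepSet {V : Type*} (G : SimpleGraph V) (s : Set V) : Prop :=
  s.Pairwise fun a b => ¬ G.Adj a b

/-- `v` is a cut-vertex of `G`: deleting `v` increases the number of connected components. -/
def IsCutVertex {V : Type*} (G : SimpleGraph V) (v : V) : Prop :=
  Nat.card G.ConnectedComponent < Nat.card (G.induce {v}ᶜ).ConnectedComponent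

/-- `G` contains an induced subgraph isomorphic to `H`. -/
def HasInducedCopy {V W : Type*} (G : SimpleGraph V) (H : SimpleGraph W) : Prop :=
  ∃ s : Set V, Nonempty (H ≃g G.induce s)

/-- `H_n^1`: the complete graph on `Fin n` (the `Sum.inl` part) with a pendant vertex
(`Sum.inr i`) attached to each clique vertex `Sum.inl i`. -/
def Hgraph1 (n : ℕ) : SimpleGraph (Fin n ⊕ Fin n) :=
  SimpleGraph.fromRel (fun a b => match a, b with
    | Sum.inl _, Sum.inl _ => True
    | Sum.inl i, Sum.inr j => i = j
    | _, _ => False)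

/-- `H_n^2`: the complete graph on `Fin n` with a path of length 2 attached to each
clique vertex: `Sum.inl i` — `Sum.inr (Sum.inl i)` — `Sum.inr (Sum.inr i)`. -/
def Hgraph2 (n : ℕ) : SimpleGraph (Fin n ⊕ (Fin n ⊕ Fin n)) :=
  SimpleGraph.fromRel (fun a b => match a, b with
    | Sum.inl _, Sum.inl _ => True
    | Sum.inl i, Sum.inr (Sum.inl j) => i = j
    | Sum.inr (Sum.inl i), Sum.inr (Sum.inr j) => i = j
    | _, _ => False)

/-- `T_n`: the complete graph on `Fin n` with a triangle attached at each clique vertex. -/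
def Tgraph (n : ℕ) : SimpleGraph (Fin n ⊕ (Fin n ⊕ Fin n)) :=
  SimpleGraph.fromRel (fun a b => match a, b with
    | Sum.inl _, Sum.inl _ => True
    | Sum.inl i, Sum.inr (Sum.inl j) => i = j
    | Sum.inl i, Sum.inr (Sum.inr j) => i = j
    | Sum.inr (Sum.inl i), Sum.inr (Sum.inr j) => i = j
    | _, _ => False)

/-- `S_n^2`: the spider with `n` legs of length 2 (center `Sum.inl ()`). -/
def Sgraph2 (n : ℕ) : SimpleGraph (Unit ⊕ (Fin n ⊕ Fin n)) :=
  SimpleGraph.fromRel (fun a b => match a, b with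
    | Sum.inl _, Sum.inr (Sum.inl _) => True
    | Sum.inr (Sum.inl i), Sum.inr (Sum.inr j) => i = j
    | _, _ => False)

/-- `F_n`: `n` triangles sharing exactly one common vertex (the center `Sum.inl ()`). -/
def Fgraph (n : ℕ) : SimpleGraph (Unit ⊕ (Fin n ⊕ Fin n)) :=
  SimpleGraph.fromRel (fun a b => match a, b with
    | Sum.inl _, Sum.inr _ => True
    | Sum.inr (Sum.inl i), Sum.inr (Sum.inr j) => i = j
    | _, _ => False)

/-- The matching number of `G`. -/
noncomputable def matchNum {V : Type*} (G : SimpleGraph V) : ℕ :=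
  sSup {k | ∃ M : G.Subgraph, M.IsMatching ∧ M.edgeSet.ncard = k}

/-- The vertex cover number of `G`. -/
noncomputable def coverNum {V : Type*} (G : SimpleGraph V) : ℕ :=
  sInf {k | ∃ s : Set V, (∀ ⦃u w⦄, G.Adj u w → u ∈ s ∨ w ∈ s) ∧ s.ncard = k}


lemma hasInducedCopy_iff {V W : Type*} (G : SimpleGraph V) (H : SimpleGraph W) :
    HasInducedCopy G H ↔ ∃ f : W → V, Function.Injective f ∧
      ∀ a b, H.Adj a b ↔ G.Adj (f a) (f b) := by
  constructor
  · rintro ⟨s, ⟨e⟩⟩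
    refine ⟨fun w => (e w : V), ?_, ?_⟩
    · intro a b hab
      exact e.injective (Subtype.ext hab)
    · intro a b
      rw [show H.Adj a b ↔ (G.induce s).Adj (e a) (e b) from e.map_adj_iff.symm]
      simp [comap_adj]
  · rintro ⟨f, hinj, hiff⟩
    refine ⟨Set.range f, ⟨⟨Equiv.ofInjective f hinj, ?_⟩⟩⟩
    intro a b
    simp [comap_adj, Equiv.ofInjective, ← hiff]

def IPL {V : Type*} (G : SimpleGraph V) (l : List V) : Prop :=
  l.Nodup ∧ ∀ i j : ℕ, (hi : i < l.length) → (hj : j < l.length) →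
    (G.Adj l[i] l[j] ↔ (i + 1 = j ∨ j + 1 = i))

lemma ipl_append {V : Type*} {G : SimpleGraph V} {l : List V} {e w : V}
    (h : IPL G (l ++ [e]))
    (he : G.Adj e w) (hl : ∀ v ∈ l, ¬ G.Adj v w) (hw : w ∉ l ++ [e]) :
    IPL G ((l ++ [e]) ++ [w]) := by
  obtain ⟨hnd, hadj⟩ := h
  have hL : (l ++ [e]).length = l.length + 1 := by simp
  constructor
  · simp only [List.nodup_append, List.nodup_cons, List.nodup_nil] at *
    refine ⟨hnd, by simp, ?_⟩
    intro a ha b hb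
    simp only [List.mem_singleton] at hb
    subst hb
    intro h; subst h; exact hw ha
  · have hget : ∀ i, (hi : i < l.length + 1) → ((l ++ [e]) ++ [w])[i]'(by simp; omega) = (l ++ [e])[i]'(by omega) := by
      intro i hi
      rw [List.getElem_append_left]
    have hgetw : ((l ++ [e]) ++ [w])[l.length + 1]'(by simp) = w := by
      rw [List.getElem_append_right] <;> simp [hL]
    have key : ∀ i, (hi : i < l.length + 1) →
        (G.Adj (((l ++ [e]) ++ [w])[i]'(by simp; omega)) (((l ++ [e]) ++ [w])[l.length+1]'(by simp)) ↔
          (i + 1 = l.length + 1 ∨ l.length + 1 + 1 = i)) := by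
      intro i hi
      rw [hget i hi, hgetw]
      rcases Nat.lt_or_ge i l.length with h1 | h1
      · rw [List.getElem_append_left h1]
        constructor
        · intro hc; exact absurd hc (hl _ (List.getElem_mem h1))
        · omega
      · have : i = l.length := by omega
        subst this
        rw [List.getElem_append_right (by omega)]
        simp [he]
    intro i j hi hj
    simp only [List.length_append, List.length_singleton, hL] at hi hj
    rcases Nat.lt_or_ge i (l.length + 1) with h1 | h1 <;> rcases Nat.lt_or_ge j (l.length + 1) with h2 | h2
    · rw [hget i h1, hget j h2]
      exact hadj i j (by omega) (by omega)
    · have : j = l.length + 1 := by omega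
      subst this
      exact key i h1
    · have : i = l.length + 1 := by omega
      subst this
      rw [G.adj_comm]
      rw [key j h2]
      omega
    · have h3 : i = l.length + 1 := by omega
      have h4 : j = l.length + 1 := by omega
      subst h3; subst h4
      rw [hgetw]
      simp

lemma ipl_copy {V : Type*} {G : SimpleGraph V} {l : List V} (h : IPL G l) :
    HasInducedCopy G (SimpleGraph.pathGraph l.length) := by
  rw [hasInducedCopy_iff]
  refine ⟨fun i => l[i], ?_, ?_⟩
  · intro a b hab
    exact List.nodup_iff_injective_get.mp h.1 (by simpa [List.get] using hab)
  · intro a b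
    rw [pathGraph_adj]
    exact (h.2 a b a.isLt b.isLt).symm

lemma copy_mono {V : Type*} {G : SimpleGraph V} {m n : ℕ} (hmn : n ≤ m)
    (h : HasInducedCopy G (SimpleGraph.pathGraph m)) :
    HasInducedCopy G (SimpleGraph.pathGraph n) := by
  rw [hasInducedCopy_iff] at h ⊢
  obtain ⟨f, hinj, hiff⟩ := h
  refine ⟨f ∘ Fin.castLE hmn, hinj.comp (Fin.castLE_injective hmn), ?_⟩
  intro a b
  simp only [Function.comp_apply, ← hiff, pathGraph_adj, Fin.coe_castLE]

theorem stmt16 {V V' : Type*} [Fintype V] (G : SimpleGraph V) (G' : SimpleGraph V')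
    (N n : ℕ) (x y : Fin N → V)
    (hM : ∀ i, G.Adj (x i) (y i))
    (hdisj : ∀ i j, i ≠ j → ({x i, y i} : Set V) ∩ {x j, y j} = ∅)
    (hindM : ∀ i j, i ≠ j → ¬ G.Adj (x i) (x j) ∧ ¬ G.Adj (y i) (y j) ∧
      ¬ G.Adj (x i) (y j) ∧ ¬ G.Adj (y i) (x j))
    (p : V → V') (hsurj : Function.Surjective p)
    (hp : ∀ a b : V, p a = p b ↔ a = b ∨ ∃ i, ({a, b} : Set V) = {x i, y i})
    (hadj : ∀ a b : V', G'.Adj a b ↔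
      a ≠ b ∧ ∃ u w : V, p u = a ∧ p w = b ∧ G.Adj u w)
    (hpath : HasInducedCopy G' (SimpleGraph.pathGraph (3 * n + 1))) :
    (∃ m : ℕ, 3 * n + 1 ≤ m ∧ HasInducedCopy G (SimpleGraph.pathGraph m)) ∧
    HasInducedCopy G (SimpleGraph.pathGraph n) := by
  classical
  obtain ⟨f, hfinj, hfadj⟩ := (hasInducedCopy_iff G' _).mp hpath
  have hfadj' : ∀ a b : Fin (3*n+1), G'.Adj (f a) (f b) ↔
      (a.val + 1 = b.val ∨ b.val + 1 = a.val) := by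
    intro a b
    rw [← hfadj, pathGraph_adj]
  have hfne : ∀ a b : Fin (3*n+1), a.val ≠ b.val → f a ≠ f b := by
    intro a b hne h
    exact hne (congrArg Fin.val (hfinj h))
  have key1 : ∀ a b : Fin (3*n+1), a.val + 1 = b.val →
      ∃ u w, p u = f a ∧ p w = f b ∧ G.Adj u w := by
    intro a b hab
    have h := (hfadj' a b).mpr (Or.inl hab)
    rw [hadj] at h
    exact h.2
  have key2 : ∀ a b : Fin (3*n+1), a.val ≠ b.val → a.val + 1 ≠ b.val → b.val + 1 ≠ a.val →
      ∀ u w, p u = f a → p w = f b → ¬ G.Adj u w := by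
    intro a b hne h1 h2 u w hu hw hG
    have : G'.Adj (f a) (f b) := (hadj _ _).mpr ⟨hfne a b hne, u, w, hu, hw, hG⟩
    rw [hfadj'] at this
    omega
  have hxyp : ∀ i : Fin N, p (x i) = p (y i) := by
    intro i
    exact (hp _ _).mpr (Or.inr ⟨i, rfl⟩)
  have hxyne : ∀ i : Fin N, x i ≠ y i := fun i => (hM i).ne
  -- class description
  have classdesc : ∀ t : V', (∃ u, p u = t ∧ ∀ v, p v = t → v = u) ∨
      (∃ i : Fin N, p (x i) = t ∧ p (y i) = t ∧ ∀ v, p v = t → v = x i ∨ v = y i) := by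
    intro t
    obtain ⟨v0, hv0⟩ := hsurj t
    by_cases hm : ∃ i : Fin N, v0 = x i ∨ v0 = y i
    · obtain ⟨i, hi⟩ := hm
      right
      have hx : p (x i) = t := by
        rcases hi with h | h
        · rw [← h]; exact hv0
        · rw [hxyp i, ← h]; exact hv0
      have hy : p (y i) = t := by rw [← hxyp i]; exact hx
      refine ⟨i, hx, hy, ?_⟩
      intro v hv
      have := (hp v (x i)).mp (by rw [hv, hx])
      rcases this with h | ⟨j, hj⟩
      · exact Or.inl h
      · have hxmem : x i ∈ ({x j, y j} : Set V) := by
          rw [← hj]; right; rfl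
        by_cases hij : j = i
        · subst hij
          have hymem : y j ∈ ({v, x j} : Set V) := by
            rw [hj]; right; rfl
          rcases hymem with h | h
          · exact Or.inr h.symm
          · exact absurd h.symm (hxyne j)
        · exfalso
          have := hdisj i j (fun h => hij h.symm)
          have : x i ∈ ({x i, y i} : Set V) ∩ {x j, y j} := ⟨by left; rfl, hxmem⟩
          rw [hdisj i j (fun h => hij h.symm)] at this
          exact this
    · left
      refine ⟨v0, hv0, ?_⟩
      intro v hv
      have := (hp v v0).mp (by rw [hv, hv0])
      rcases this with h | ⟨j, hj⟩
      · exact h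
      · exfalso
        have : v0 ∈ ({x j, y j} : Set V) := by
          rw [← hj]; right; rfl
        rcases this with h | h
        · exact hm ⟨j, Or.inl h⟩
        · exact hm ⟨j, Or.inr h⟩
  -- no edges between two distinct pair classes
  have pairfree : ∀ (i j : Fin N) (u w : V), (u = x i ∨ u = y i) → (w = x j ∨ w = y j) →
      p u ≠ p w → ¬ G.Adj u w := by
    intro i j u w hu hw hne
    by_cases hij : i = j
    · subst hij
      exfalso
      apply hne
      rcases hu with h | h <;> rcases hw with h' | h' <;> subst h <;> subst h' <;>
        simp [hxyp i]
    · obtain ⟨h1, h2, h3, h4⟩ := hindM i j hij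
      rcases hu with h | h <;> rcases hw with h' | h' <;> subst h <;> subst h' <;> assumption
  -- main induction
  have key : ∀ k, k ≤ 3*n → ∃ (l : List V) (e : V),
      IPL G (l ++ [e]) ∧
      k + 1 ≤ (l ++ [e]).length ∧
      (∀ v ∈ l ++ [e], ∃ j : Fin (3*n+1), j.val ≤ k ∧ p v = f j) ∧
      (∀ j : Fin (3*n+1), j.val = k → p e = f j) ∧
      (∀ j : Fin (3*n+1), j.val = k + 1 → ∃ w, p w = f j ∧ G.Adj e w) ∧
      (∀ j : Fin (3*n+1), j.val = k + 1 → ∀ v ∈ l, ∀ w, p w = f j → ¬ G.Adj v w) := by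
    intro k
    induction k with
    | zero =>
      intro _
      have hIPL1 : ∀ e : V, IPL G ([] ++ [e]) := by
        intro e
        constructor
        · simp
        · intro i j hi hj
          simp only [List.nil_append, List.length_singleton] at hi hj
          have : i = 0 := by omega
          have : j = 0 := by omega
          subst_vars
          simp
      by_cases h0 : 3*n = 0
      · obtain ⟨e, he⟩ := hsurj (f ⟨0, by omega⟩)
        refine ⟨[], e, hIPL1 e, by simp, ?_, ?_, ?_, ?_⟩
        · intro v hv
          simp only [List.nil_append, List.mem_singleton] at hv
          subst hv
          exact ⟨⟨0, by omega⟩, le_rfl, he⟩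
        · intro j hj
          have : j = ⟨0, by omega⟩ := Fin.ext (by simpa using hj)
          rw [this]; exact he
        · intro j hj
          exfalso; have := j.isLt; omega
        · intro j hj v hv
          simp at hv
      · obtain ⟨u, w, hu, hw, huw⟩ := key1 ⟨0, by omega⟩ ⟨1, by omega⟩ rfl
        refine ⟨[], u, hIPL1 u, by simp, ?_, ?_, ?_, ?_⟩
        · intro v hv
          simp only [List.nil_append, List.mem_singleton] at hv
          subst hv
          exact ⟨⟨0, by omega⟩, le_rfl, hu⟩
        · intro j hj
          have : j = ⟨0, by omega⟩ := Fin.ext (by simpa using hj)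
          rw [this]; exact hu
        · intro j hj
          have : j = ⟨1, by omega⟩ := Fin.ext (by simpa using hj)
          rw [this]
          exact ⟨w, hw, huw⟩
        · intro j hj v hv
          simp at hv
    | succ k ih =>
      intro hk1
      obtain ⟨l, e, hIPL, hlen, hcls, hend, hfwd, hnon⟩ := ih (by omega)
      set jk : Fin (3*n+1) := ⟨k+1, by omega⟩ with hjkdef
      obtain ⟨w0, hw0p, hw0adj⟩ := hfwd jk rfl
      have hclsz : ∀ z, p z = f jk → z ∉ l ++ [e] := by
        intro z hz hmem
        obtain ⟨j, hj, hpj⟩ := hcls z hmem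
        have : f j = f jk := by rw [← hpj, hz]
        have := congrArg Fin.val (hfinj this)
        simp only [hjkdef] at this
        omega
      have stepIPL : ∀ z, p z = f jk → G.Adj e z → IPL G ((l ++ [e]) ++ [z]) :=
        fun z hz hadjz => ipl_append hIPL hadjz (fun v hv => hnon jk rfl v hv z hz) (hclsz z hz)
      have stepcls : ∀ z, p z = f jk → ∀ v ∈ (l ++ [e]) ++ [z],
          ∃ j : Fin (3*n+1), j.val ≤ k+1 ∧ p v = f j := by
        intro z hz v hv
        rcases List.mem_append.mp hv with hv | hv
        · obtain ⟨j, hj, hpj⟩ := hcls v hv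
          exact ⟨j, by omega, hpj⟩
        · simp only [List.mem_singleton] at hv
          subst hv
          exact ⟨jk, by simp [hjkdef], hz⟩
      have stepend : ∀ z, p z = f jk → ∀ j : Fin (3*n+1), j.val = k+1 → p z = f j := by
        intro z hz j hj
        have : j = jk := Fin.ext (by simpa [hjkdef] using hj)
        rw [this]; exact hz
      have oldnon : ∀ j : Fin (3*n+1), j.val = k + 2 → ∀ v ∈ l ++ [e], ∀ w, p w = f j →
          ¬ G.Adj v w := by
        intro j hj v hv w hw
        obtain ⟨jv, hjv, hpv⟩ := hcls v hv
        exact key2 jv j (by omega) (by omega) (by omega) v w hpv hw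
      rcases classdesc (f jk) with ⟨u, hup, huniq⟩ | ⟨i, hxi, hyi, hmem⟩
      · -- singleton class k+1
        refine ⟨l ++ [e], w0, stepIPL w0 hw0p hw0adj, by simp at hlen ⊢; omega,
          stepcls w0 hw0p, stepend w0 hw0p, ?_, ?_⟩
        · intro j hj
          obtain ⟨u', w', hu', hw', h'⟩ := key1 jk j (by simp [hjkdef, hj])
          have h1 : u' = u := huniq u' hu'
          have h2 : w0 = u := huniq w0 hw0p
          exact ⟨w', hw', by rw [h2, ← h1]; exact h'⟩
        · intro j hj v hv w hw
          exact oldnon j hj v hv w hw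
      · -- pair class k+1
        have hw0mem := hmem w0 hw0p
        by_cases hlast : k + 1 = 3*n
        · refine ⟨l ++ [e], w0, stepIPL w0 hw0p hw0adj, by simp at hlen ⊢; omega,
            stepcls w0 hw0p, stepend w0 hw0p, ?_, ?_⟩
          · intro j hj; exfalso; have := j.isLt; omega
          · intro j hj; exfalso; have := j.isLt; omega
        · -- interior pair
          have hk2 : k + 2 ≤ 3*n := by omega
          set jk2 : Fin (3*n+1) := ⟨k+2, by omega⟩ with hjk2def
          obtain ⟨u', w', hu', hw', hadj'⟩ := key1 jk jk2 rfl
          have hu'mem := hmem u' hu'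
          -- class k+2 is a singleton
          rcases classdesc (f jk2) with ⟨u2, hu2p, hu2uniq⟩ | ⟨i2, hxi2, hyi2, hmem2⟩
          swap
          · exfalso
            refine pairfree i i2 u' w' hu'mem (hmem2 w' hw') ?_ hadj'
            rw [hu', hw']
            exact hfne jk jk2 (by simp [hjkdef, hjk2def])
          have hw'u2 : w' = u2 := hu2uniq w' hw'
          by_cases hc2 : G.Adj w0 u2
          · -- w0 adjacent forward too
            refine ⟨l ++ [e], w0, stepIPL w0 hw0p hw0adj, by simp at hlen ⊢; omega,
              stepcls w0 hw0p, stepend w0 hw0p, ?_, ?_⟩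
            · intro j hj
              have : j = jk2 := Fin.ext (by simpa [hjk2def] using hj)
              rw [this]
              exact ⟨u2, hu2p, hc2⟩
            · intro j hj v hv w hw
              exact oldnon j hj v hv w hw
          · by_cases hc : G.Adj e u'
            · -- go directly to u'
              refine ⟨l ++ [e], u', stepIPL u' hu' hc, by simp at hlen ⊢; omega,
                stepcls u' hu', stepend u' hu', ?_, ?_⟩
              · intro j hj
                have : j = jk2 := Fin.ext (by simpa [hjk2def] using hj)
                rw [this]
                exact ⟨w', hw', hadj'⟩
              · intro j hj v hv w hw
                exact oldnon j hj v hv w hw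
            · -- double step: w0 then u'
              have hne' : w0 ≠ u' := by
                intro h
                rw [← h] at hadj'
                rw [hw'u2] at hadj'
                exact hc2 hadj'
              have hadjw0u' : G.Adj w0 u' := by
                rcases hw0mem with h1 | h1 <;> rcases hu'mem with h2 | h2 <;>
                  rw [h1, h2]
                · exact absurd (h1.trans h2.symm) hne'
                · exact hM i
                · exact (hM i).symm
                · exact absurd (h1.trans h2.symm) hne'
              have hIPL1 : IPL G ((l ++ [e]) ++ [w0]) := stepIPL w0 hw0p hw0adj
              have hIPL2 : IPL G (((l ++ [e]) ++ [w0]) ++ [u']) := by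
                refine ipl_append hIPL1 hadjw0u' ?_ ?_
                · intro v hv
                  rcases List.mem_append.mp hv with hv | hv
                  · exact hnon jk rfl v hv u' hu'
                  · simp only [List.mem_singleton] at hv
                    subst hv
                    exact hc
                · intro hmem'
                  rcases List.mem_append.mp hmem' with h | h
                  · exact hclsz u' hu' h
                  · simp only [List.mem_singleton] at h
                    exact hne' h.symm
              refine ⟨(l ++ [e]) ++ [w0], u', hIPL2, by simp at hlen ⊢; omega, ?_,
                stepend u' hu', ?_, ?_⟩
              · intro v hv
                rcases List.mem_append.mp hv with hv | hv
                · exact stepcls w0 hw0p v hv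
                · simp only [List.mem_singleton] at hv
                  subst hv
                  exact ⟨jk, by simp [hjkdef], hu'⟩
              · intro j hj
                have : j = jk2 := Fin.ext (by simpa [hjk2def] using hj)
                rw [this]
                exact ⟨w', hw', hadj'⟩
              · intro j hj v hv w hw
                rcases List.mem_append.mp hv with hv | hv
                · exact oldnon j hj v hv w hw
                · simp only [List.mem_singleton] at hv
                  subst hv
                  have : w = u2 := hu2uniq w (by rw [hw]; congr 1; exact Fin.ext (by simp [hjk2def, hj]))
                  rw [this]
                  exact hc2
  obtain ⟨l, e, hIPL, hlen, -⟩ := key (3*n) le_rfl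
  have hcopy := ipl_copy hIPL
  exact ⟨⟨(l ++ [e]).length, by omega, hcopy⟩, copy_mono (by omega) hcopy⟩
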